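/- Let π be the uniform prior, π(ε) = 1 for ε ∈ (0,1), and let x : ℕ → ℝ satisfy x_i ≥ -1 for all i. If Σ_{i=1}^∞ x_i² = ∞ and limsup_{n→∞} S_n/√(A_n²·ln(A_n²)) > 1, then limsup_{n→∞} K_n^π = ∞. -/

import Mathlib

set_option maxHeartbeats 1000000

open MeasureTheory Filter Set

/-- Partial sum `S_n = x_1 + ... + x_n`. -/
noncomputable def S (x : ℕ → ℝ) (n : ℕ) : ℝ := ∑ i ∈ Finset.range n, x i

/-- Sum of squares `A_n² = x_1² + ... + x_n²`. -/
noncomputable def A2 (x : ℕ → ℝ) (n : ℕ) : ℝ := ∑ i ∈ Finset.range n, (x i) ^ 2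

/-- Capital process of the Bayesian strategy with prior density `π`:
`K_n^π = ∫_0^1 ∏_{i=1}^n (1 + ε x_i) π(ε) dε`. -/
noncomputable def K (π : ℝ → ℝ) (x : ℕ → ℝ) (n : ℕ) : ℝ :=
  ∫ ε in Set.Ioo (0 : ℝ) 1, (∏ i ∈ Finset.range n, (1 + ε * x i)) * π ε

/-- Assumption 1: `π` is a prior density, bounded below by `δπ` near the origin,
and `ε ↦ ε·π(ε)` is (weakly) increasing near the origin. -/
def Assumption1 (π : ℝ → ℝ) (επ δπ : ℝ) : Prop :=
  επ ∈ Set.Ioo (0 : ℝ) 1 ∧ 0 < δπ ∧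
  (∀ ε ∈ Set.Icc (0 : ℝ) 1, 0 ≤ π ε) ∧
  MeasureTheory.IntegrableOn π (Set.Icc (0 : ℝ) 1) ∧
  (∀ ε ∈ Set.Ioo (0 : ℝ) επ, δπ ≤ π ε) ∧
  MonotoneOn (fun ε => ε * π ε) (Set.Ioo (0 : ℝ) επ)


lemma aux_deriv (θ v : ℝ) (hθ1 : θ < 1) (hv : -1 < v) :
    HasDerivAt (fun u : ℝ => Real.log (1 + u) - u + u ^ 2 / (2 * (1 - θ)))
      ((1 + v)⁻¹ - 1 + v / (1 - θ)) v := by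
  have h1 : (0:ℝ) < 1 + v := by linarith
  have hlog : HasDerivAt (fun u : ℝ => Real.log (1 + u)) ((1 + v)⁻¹) v := by
    have := (Real.hasDerivAt_log h1.ne').comp v (((hasDerivAt_id v).const_add 1))
    simpa [Function.comp_def] using this
  have hq : HasDerivAt (fun u : ℝ => u ^ 2 / (2 * (1 - θ))) (v / (1 - θ)) v := by
    have := (hasDerivAt_pow 2 v).div_const (2 * (1 - θ))
    refine this.congr_deriv ?_
    have : (1:ℝ) - θ ≠ 0 := by linarith
    field_simp
    ring
  exact (hlog.sub (hasDerivAt_id v)).add hq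

lemma aux_log (θ u : ℝ) (hθ0 : 0 < θ) (hθ1 : θ < 1) (hu : -θ ≤ u) :
    Real.exp (u - u ^ 2 / (2 * (1 - θ))) ≤ 1 + u := by
  have h1u : (0:ℝ) < 1 + u := by linarith
  set g : ℝ → ℝ := fun u => Real.log (1 + u) - u + u ^ 2 / (2 * (1 - θ)) with hg
  have hg0 : g 0 = 0 := by simp [hg]
  have key : 0 ≤ g u := by
    rcases lt_trichotomy u 0 with h | rfl | h
    · have hanti : StrictAntiOn g (Set.Icc (-θ) 0) := by
        apply strictAntiOn_of_deriv_neg (convex_Icc _ _)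
        · intro v hv
          exact (aux_deriv θ v hθ1 (by simp at hv; linarith [hv.1])).continuousAt.continuousWithinAt
        · intro v hv
          rw [interior_Icc] at hv
          obtain ⟨hv1, hv2⟩ := hv
          rw [(aux_deriv θ v hθ1 (by linarith)).deriv]
          have h1v : (0:ℝ) < 1 + v := by linarith
          have h1θ : (0:ℝ) < 1 - θ := by linarith
          have e1 : (1 + v)⁻¹ - 1 + v / (1 + v) = 0 := by field_simp; ring
          have e2 : v / (1-θ) < v/(1+v) := by
            rw [div_lt_div_iff₀ h1θ h1v]; nlinarith
          linarith
      have := hanti ⟨hu, h.le⟩ (Set.right_mem_Icc.2 (by linarith)) h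
      rw [hg0] at this; linarith
    · simp [hg0]
    · have hmono : StrictMonoOn g (Set.Ici (0:ℝ)) := by
        apply strictMonoOn_of_deriv_pos (convex_Ici 0)
        · intro v hv
          exact (aux_deriv θ v hθ1 (by simp at hv; linarith)).continuousAt.continuousWithinAt
        · intro v hv
          rw [interior_Ici] at hv
          have hv0 : (0:ℝ) < v := hv
          rw [(aux_deriv θ v hθ1 (by linarith)).deriv]
          have h1v : (0:ℝ) < 1 + v := by linarith
          have h1θ : (0:ℝ) < 1 - θ := by linarith
          have e1 : (1 + v)⁻¹ - 1 + v / (1 + v) = 0 := by field_simp; ring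
          have e2 : v / (1+v) < v/(1-θ) := by
            rw [div_lt_div_iff₀ h1v h1θ]; nlinarith
          linarith
      have := hmono (Set.self_mem_Ici) (Set.mem_Ici.2 h.le) h
      rw [hg0] at this; linarith
  have : u - u ^ 2 / (2 * (1 - θ)) ≤ Real.log (1 + u) := by
    simp only [hg] at key; linarith
  calc Real.exp (u - u ^ 2 / (2 * (1 - θ))) ≤ Real.exp (Real.log (1 + u)) := Real.exp_le_exp.2 this
    _ = 1 + u := Real.exp_log h1u

lemma prod_lb (x : ℕ → ℝ) (hx : ∀ i, -1 ≤ x i) (n : ℕ) (θ ε : ℝ)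
    (hθ0 : 0 < θ) (hθ1 : θ < 1) (hε0 : 0 ≤ ε) (hεθ : ε ≤ θ) :
    Real.exp (ε * S x n - ε ^ 2 * A2 x n / (2 * (1 - θ)))
      ≤ ∏ i ∈ Finset.range n, (1 + ε * x i) := by
  have h1 : ε * S x n - ε ^ 2 * A2 x n / (2 * (1 - θ))
      = ∑ i ∈ Finset.range n, (ε * x i - (ε * x i) ^ 2 / (2 * (1 - θ))) := by
    rw [Finset.sum_sub_distrib, ← Finset.sum_div, S, A2, Finset.mul_sum, Finset.mul_sum]
    congr 1
    · congr 1
      apply Finset.sum_congr rfl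
      intro i _
      ring
  rw [h1, Real.exp_sum]
  apply Finset.prod_le_prod
  · intro i _; positivity
  · intro i _
    apply aux_log θ _ hθ0 hθ1
    have := hx i
    nlinarith

lemma K_lb (x : ℕ → ℝ) (hx : ∀ i, -1 ≤ x i) (n : ℕ) (θ a b m : ℝ)
    (hθ0 : 0 < θ) (hθ1 : θ < 1) (ha : 0 < a) (hab : a ≤ b) (hb : b ≤ θ)
    (hm : ∀ ε ∈ Set.Icc a b, m ≤ ε * S x n - ε ^ 2 * A2 x n / (2 * (1 - θ))) :
    (b - a) * Real.exp m ≤ K (fun _ => (1 : ℝ)) x n := by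
  have hKdef : K (fun _ => (1 : ℝ)) x n
      = ∫ ε in Set.Ioo (0:ℝ) 1, (∏ i ∈ Finset.range n, (1 + ε * x i)) := by
    unfold K; simp
  have hcont : Continuous fun ε : ℝ => ∏ i ∈ Finset.range n, (1 + ε * x i) := by
    apply continuous_finset_prod
    intro i _
    continuity
  have hsub : Set.Icc a b ⊆ Set.Ioo (0:ℝ) 1 := fun ε hε =>
    ⟨lt_of_lt_of_le ha hε.1, lt_of_le_of_lt (hε.2.trans hb) hθ1⟩
  have hint : IntegrableOn (fun ε : ℝ => ∏ i ∈ Finset.range n, (1 + ε * x i))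
      (Set.Ioo (0:ℝ) 1) := (hcont.integrableOn_Icc (a := 0) (b := 1)).mono_set Set.Ioo_subset_Icc_self
  have hnonneg : ∀ ε ∈ Set.Ioo (0:ℝ) 1, 0 ≤ ∏ i ∈ Finset.range n, (1 + ε * x i) := by
    intro ε hε
    apply Finset.prod_nonneg
    intro i _
    have := hx i
    nlinarith [hε.1.le, hε.2.le]
  have step1 : ∫ ε in Set.Icc a b, (∏ i ∈ Finset.range n, (1 + ε * x i))
      ≤ ∫ ε in Set.Ioo (0:ℝ) 1, (∏ i ∈ Finset.range n, (1 + ε * x i)) := by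
    apply setIntegral_mono_set hint
    · filter_upwards [ae_restrict_mem measurableSet_Ioo] with ε hε using hnonneg ε hε
    · exact HasSubset.Subset.eventuallyLE hsub
  have step2 : (b - a) * Real.exp m ≤ ∫ ε in Set.Icc a b, (∏ i ∈ Finset.range n, (1 + ε * x i)) := by
    have hconst : ∫ _ε in Set.Icc a b, Real.exp m = (b - a) * Real.exp m := by
      rw [setIntegral_const, Real.volume_real_Icc_of_le hab, smul_eq_mul]
    rw [← hconst]
    apply setIntegral_mono_on (integrableOn_const (by rw [Real.volume_Icc]; exact ENNReal.ofReal_ne_top))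
      (hint.mono_set hsub) measurableSet_Icc
    intro ε hε
    calc Real.exp m ≤ Real.exp (ε * S x n - ε ^ 2 * A2 x n / (2 * (1 - θ))) :=
          Real.exp_le_exp.2 (hm ε hε)
      _ ≤ _ := prod_lb x hx n θ ε hθ0 hθ1 (le_of_lt (lt_of_lt_of_le ha hε.1)) ((hε.2).trans hb)
  rw [hKdef]
  linarith

theorem uniform_prior_rate (x : ℕ → ℝ) (hx : ∀ i, -1 ≤ x i)
    (hA : Filter.Tendsto (A2 x) Filter.atTop Filter.atTop)
    (hls : 1 < Filter.limsup
      (fun n => ((S x n / Real.sqrt (A2 x n * Real.log (A2 x n)) : ℝ) : EReal))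
      Filter.atTop) :
    Filter.limsup (fun n => ((K (fun _ => (1 : ℝ)) x n : ℝ) : EReal)) Filter.atTop = ⊤ := by
  obtain ⟨b, hb1, hbl⟩ := exists_between hls
  have hbt : b ≠ ⊤ := (lt_of_lt_of_le hbl le_top).ne
  have hbb : b ≠ ⊥ := by rintro rfl; exact not_lt_bot hb1
  set c := b.toReal with hcdef
  have hbc : b = (c : EReal) := (EReal.coe_toReal hbt hbb).symm
  have hc1 : (1:ℝ) < c := by
    rw [hbc] at hb1; exact_mod_cast hb1
  have hc0 : (0:ℝ) < c := by linarith
  have hfreq : ∃ᶠ n in atTop, c < S x n / Real.sqrt (A2 x n * Real.log (A2 x n)) := by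
    rw [hbc] at hbl
    exact (frequently_lt_of_lt_limsup (by isBoundedDefault) hbl).mono
      (fun n hn => by exact_mod_cast hn)
  set δ : ℝ := min (1/2) ((c^2-1)/(4*c^2)) with hδdef
  have hc2 : (0:ℝ) < c^2 - 1 := by nlinarith
  have hδ0 : 0 < δ := lt_min (by norm_num) (by positivity)
  have hδh : δ ≤ 1/2 := min_le_left _ _
  have hδ1 : δ < 1 := by linarith
  have hδle : 4*c^2*δ ≤ c^2 - 1 := by
    have h := min_le_right (1/2:ℝ) ((c^2-1)/(4*c^2))
    rw [le_div_iff₀ (by positivity)] at h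
    calc 4*c^2*δ = δ * (4*c^2) := by ring
      _ ≤ c^2 - 1 := h
  clear_value c δ
  clear hcdef hbc hb1 hbl hbt hbb hls b hδdef
  rw [EReal.eq_top_iff_forall_lt]
  intro M
  have key : ∀ M' : ℝ, (M' : EReal) ≤ limsup
      (fun n => ((K (fun _ => (1 : ℝ)) x n : ℝ) : EReal)) atTop := by
    intro M'
    apply le_limsup_of_frequently_le'
    have hg1 : Tendsto (fun a : ℝ => δ*c*(1-δ)*Real.exp ((c^2-1)/4 * Real.log a)) atTop atTop := by
      apply Tendsto.const_mul_atTop (by nlinarith : (0:ℝ) < δ*c*(1-δ))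
      exact Real.tendsto_exp_atTop.comp
        ((Real.tendsto_log_atTop).const_mul_atTop (by linarith : (0:ℝ) < (c^2-1)/4))
    have hg2 : Tendsto (fun a : ℝ => δ/2*Real.exp (δ^2/12 * a)) atTop atTop := by
      apply Tendsto.const_mul_atTop (by positivity : (0:ℝ) < δ/2)
      exact Real.tendsto_exp_atTop.comp (tendsto_id.const_mul_atTop (by positivity : (0:ℝ) < δ^2/12))
    have hev : ∀ᶠ a : ℝ in atTop, 3 ≤ a ∧ M' ≤ δ*c*(1-δ)*Real.exp ((c^2-1)/4 * Real.log a)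
        ∧ M' ≤ δ/2*Real.exp (δ^2/12 * a) :=
      (eventually_ge_atTop 3).and ((hg1.eventually_ge_atTop M').and (hg2.eventually_ge_atTop M'))
    apply (hfreq.and_eventually (hA.eventually hev)).mono
    rintro n ⟨hS, h3, hM1, hM2⟩
    rw [EReal.coe_le_coe_iff]
    set Aₙ := A2 x n with hAn
    set Sₙ := S x n with hSn
    set L := Real.log Aₙ with hLdef
    clear_value Aₙ Sₙ L
    have hApos : (0:ℝ) < Aₙ := by linarith
    have hL1 : 1 ≤ L := by
      have h3' : Real.exp 1 ≤ 3 := by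
        have := Real.exp_one_lt_d9; linarith
      calc (1:ℝ) = Real.log (Real.exp 1) := (Real.log_exp 1).symm
        _ ≤ L := by rw [hLdef]; exact (Real.log_le_log_iff (Real.exp_pos 1) hApos).2 (le_trans h3' h3)
    have hALpos : (0:ℝ) < Aₙ * L := by nlinarith
    have hsqpos : 0 < Real.sqrt (Aₙ * L) := Real.sqrt_pos.2 hALpos
    have hS' : c * Real.sqrt (Aₙ * L) ≤ Sₙ := ((lt_div_iff₀ hsqpos).1 hS).le
    have hSpos : 0 < Sₙ := lt_of_lt_of_le (by positivity) hS'
    have hS2 : c^2 * (Aₙ * L) ≤ Sₙ^2 := by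
      have hms := mul_self_le_mul_self (by positivity : (0:ℝ) ≤ c * Real.sqrt (Aₙ * L)) hS'
      nlinarith [Real.sq_sqrt hALpos.le]
    have hAexp : Aₙ = Real.exp L := by rw [hLdef]; exact (Real.exp_log hApos).symm
    have hsqrtA : Real.sqrt Aₙ = Real.exp (L/2) := by
      have h2 : Real.exp (L/2) ^ 2 = Aₙ := by
        rw [sq, ← Real.exp_add, show L/2 + L/2 = L by ring, ← hAexp]
      rw [← h2, Real.sqrt_sq (Real.exp_pos _).le]
    by_cases hcase : Sₙ * (1-δ) * (1+δ) ≤ δ * Aₙ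
    · -- Case 1 : small ε̂, use interval [a, a(1+δ)]
      set a := Sₙ * (1-δ) / Aₙ with hadef
      clear_value a
      have ha : 0 < a := by
        rw [hadef]; apply div_pos _ hApos; nlinarith
      have hb' : a * (1+δ) ≤ δ := by
        rw [hadef, div_mul_eq_mul_div, div_le_iff₀ hApos]
        nlinarith
      set m := (1-δ^2) * (1-δ) * Sₙ^2 / (2*Aₙ) with hmdef
      clear_value m
      have hmL : (c^2+1)/4 * L ≤ m := by
        rw [hmdef, le_div_iff₀ (by positivity)]
        have hcoef : (c^2+1)/2 ≤ (1-δ^2) * (1-δ) * c^2 := by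
          have hA1 : 1 - 2*δ ≤ (1-δ^2) * (1-δ) := by nlinarith [sq_nonneg δ, mul_nonneg (mul_nonneg hδ0.le hδ0.le) hδ0.le]
          have hA2 : (1-2*δ)*c^2 ≤ (1-δ^2) * (1-δ) * c^2 := mul_le_mul_of_nonneg_right hA1 (sq_nonneg c)
          linarith
        have h1 : (1-δ^2) * (1-δ) * (c^2 * (Aₙ * L)) ≤ (1-δ^2) * (1-δ) * Sₙ^2 :=
          mul_le_mul_of_nonneg_left hS2 (by nlinarith)
        have h2 : ((c^2+1)/2) * (Aₙ * L) ≤ ((1-δ^2) * (1-δ) * c^2) * (Aₙ * L) :=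
          mul_le_mul_of_nonneg_right hcoef hALpos.le
        nlinarith
      have hK := K_lb x hx n δ a (a*(1+δ)) m hδ0 hδ1 ha
        (le_mul_of_one_le_right ha.le (by linarith)) hb' ?_
      · -- conclude in case 1
        have haL : c * (1-δ) * Real.exp (-(L/2)) ≤ a := by
          have e1 : Real.exp (-(L/2)) = Real.sqrt Aₙ / Aₙ := by
            rw [hsqrtA, hAexp, ← Real.exp_sub, show L/2 - L = -(L/2) by ring]
          have hsA : c * Real.sqrt Aₙ ≤ Sₙ := by
            refine le_trans ?_ hS'
            apply mul_le_mul_of_nonneg_left _ hc0.le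
            rw [Real.sqrt_mul hApos.le]
            nth_rewrite 1 [← mul_one (Real.sqrt Aₙ)]
            exact mul_le_mul_of_nonneg_left (Real.one_le_sqrt.2 hL1) (Real.sqrt_nonneg _)
          have h2' : (c * Real.sqrt Aₙ) * (1-δ) ≤ Sₙ * (1-δ) :=
            mul_le_mul_of_nonneg_right hsA (by linarith)
          rw [e1, hadef]
          rw [show c * (1-δ) * (Real.sqrt Aₙ / Aₙ) = (c * Real.sqrt Aₙ) * (1-δ) / Aₙ by ring]
          rw [div_le_div_iff₀ hApos hApos]
          nlinarith [mul_le_mul_of_nonneg_right h2' hApos.le]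
        have hchain : δ*c*(1-δ)*Real.exp ((c^2-1)/4 * L) ≤ (a*(1+δ) - a) * Real.exp m := by
          have eexp : Real.exp (-(L/2)) * Real.exp ((c^2+1)/4 * L) = Real.exp ((c^2-1)/4 * L) := by
            rw [← Real.exp_add]; congr 1; ring
          have e2 : δ*c*(1-δ)*Real.exp ((c^2-1)/4 * L)
              = (c*(1-δ)*Real.exp (-(L/2))) * δ * Real.exp ((c^2+1)/4 * L) := by
            rw [← eexp]; ring
          rw [e2, show a*(1+δ) - a = a * δ * 1 by ring]
          have : a * δ * 1 * Real.exp m = a * δ * Real.exp m := by ring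
          rw [this]
          apply mul_le_mul (mul_le_mul_of_nonneg_right haL hδ0.le)
            (Real.exp_le_exp.2 hmL) (Real.exp_pos _).le (by positivity)
        linarith
      · -- the pointwise exponent bound on [a, a(1+δ)]
        intro ε hε
        obtain ⟨hε1, hε2⟩ := hε
        have hεa' : Sₙ*(1-δ) ≤ ε*Aₙ := by
          rw [hadef, div_le_iff₀ hApos] at hε1; linarith
        have hεb' : ε*Aₙ ≤ Sₙ*(1-δ)*(1+δ) := by
          rw [hadef, div_mul_eq_mul_div, le_div_iff₀ hApos] at hε2; linarith
        have hp1 : 0 ≤ Sₙ*(1-δ)*(1+δ) - ε*Aₙ := by linarith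
        have hp2 : 0 ≤ ε*Aₙ - Sₙ*(1-δ)*(1-δ) := by nlinarith
        have key2 : 0 ≤ 2*Aₙ*(1-δ)*ε*Sₙ - ε^2*Aₙ^2 - (1-δ^2)*(1-δ)^2*Sₙ^2 := by
          nlinarith [mul_nonneg hp1 hp2]
        have h2Aδ : (0:ℝ) < 2*Aₙ*(1-δ) := by nlinarith
        have h1δ : (1:ℝ) - δ ≠ 0 := by linarith
        have hA0 : Aₙ ≠ 0 := ne_of_gt hApos
        have expand : ε*Sₙ - ε^2*Aₙ/(2*(1-δ)) - m
            = (2*Aₙ*(1-δ)*ε*Sₙ - ε^2*Aₙ^2 - (1-δ^2)*(1-δ)^2*Sₙ^2) / (2*Aₙ*(1-δ)) := by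
          rw [hmdef]; field_simp
        have hnn := div_nonneg key2 h2Aδ.le
        rw [← expand] at hnn
        rw [← hSn, ← hAn]
        linarith
    · -- Case 2 : large ε̂, use interval [δ/2, δ]
      push_neg at hcase
      have hK := K_lb x hx n δ (δ/2) δ (δ^2/12 * Aₙ) hδ0 hδ1 (by positivity)
        (by linarith) (le_refl δ) ?_
      · have : (δ - δ/2) * Real.exp (δ^2/12 * Aₙ) = δ/2 * Real.exp (δ^2/12 * Aₙ) := by ring
        rw [this] at hK
        linarith
      · intro ε hε
        obtain ⟨hε1, hε2⟩ := hε
        have hε0 : 0 < ε := lt_of_lt_of_le (by positivity) hε1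
        have hR : 4*δ*Aₙ ≤ 6*(1-δ)*Sₙ := by
          nlinarith [mul_nonneg (mul_nonneg hSpos.le (by linarith : (0:ℝ) ≤ 1-δ))
            (by linarith : (0:ℝ) ≤ 2-4*δ)]
        have key2 : 0 ≤ 12*(1-δ)*ε*Sₙ - 6*ε^2*Aₙ - δ^2*Aₙ*(1-δ) := by
          nlinarith [mul_nonneg (mul_nonneg hε0.le hApos.le) (by linarith : (0:ℝ) ≤ δ - ε),
            mul_nonneg (by linarith : (0:ℝ) ≤ ε - δ/2) (by nlinarith : (0:ℝ) ≤ 2*(1-δ)*Sₙ - δ*Aₙ),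
            mul_le_mul_of_nonneg_left hR hδ0.le,
            mul_nonneg (mul_nonneg hδ0.le hδ0.le) (mul_nonneg hδ0.le hApos.le)]
        have h12δ : (0:ℝ) < 12*(1-δ) := by linarith
        have h1δ : (1:ℝ) - δ ≠ 0 := by linarith
        have expand : ε*Sₙ - ε^2*Aₙ/(2*(1-δ)) - δ^2/12*Aₙ
            = (12*(1-δ)*ε*Sₙ - 6*ε^2*Aₙ - δ^2*Aₙ*(1-δ)) / (12*(1-δ)) := by
          field_simp; ring
        have hnn := div_nonneg key2 h12δ.le
        rw [← expand] at hnn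
        rw [← hSn, ← hAn]
        linarith
  calc (M : EReal) < ((M+1 : ℝ) : EReal) := by exact_mod_cast lt_add_one M
    _ ≤ _ := key (M+1)
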